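/- For every natural number k, the one-parameter deformation F : ℝ^(3+k) × ℝ → ℝ given by F(w₁,…,w_k,x,y,z,λ) = w₁² + ⋯ + w_k² + x³ + y³ + z³ + λxyz is bi-Lipschitz 𝒦-trivial as a germ at the origin. -/

import Mathlib

/-- `K` is bi-Lipschitz on the set `U`. -/
def BiLipOn {α β : Type*} [PseudoMetricSpace α] [PseudoMetricSpace β]
    (K : α → β) (U : Set α) : Prop :=
  ∃ C > (0 : ℝ), ∀ a ∈ U, ∀ b ∈ U,
    dist a b / C ≤ dist (K a) (K b) ∧ dist (K a) (K b) ≤ C * dist a b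

/-- A one-parameter deformation `Fam : E × ℝ → F` of `f = Fam (·, 0)` is bi-Lipschitz
𝒦-trivial as a germ at the origin: there are a neighbourhood `U` of `0` in
`ℝ × E × F` and `θ : ℝ × E × F → F`, and a neighbourhood `V` of `0` in `ℝ × E` and
`h : ℝ × E → E` with `h (0, x) = x`, such that `H(λ,x) = (λ, h(λ,x))` is bi-Lipschitz
on `V`, `K(λ,x,y) = (λ, h(λ,x), θ(λ,x,y))` is bi-Lipschitz on `U`, `θ` preserves the
zero section, and `θ(λ, x, Fam(x,λ)) = Fam(h(λ,x), 0)`. -/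
def BiLipKTrivial {E F : Type*} [NormedAddCommGroup E] [NormedAddCommGroup F]
    (Fam : E × ℝ → F) : Prop :=
  ∃ (U : Set (ℝ × E × F)) (θ : ℝ × E × F → F) (V : Set (ℝ × E)) (h : ℝ × E → E),
    U ∈ nhds 0 ∧ V ∈ nhds 0 ∧
    (∀ x : E, ((0 : ℝ), x) ∈ V → h (0, x) = x) ∧
    BiLipOn (fun q : ℝ × E => (q.1, h q)) V ∧
    BiLipOn (fun q : ℝ × E × F => (q.1, h (q.1, q.2.1), θ q)) U ∧
    (∀ (l : ℝ) (x : E), (l, x, (0 : F)) ∈ U → θ (l, x, 0) = 0) ∧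
    (∀ (l : ℝ) (x : E), (l, x) ∈ V → (l, x, Fam (x, l)) ∈ U →
      θ (l, x, Fam (x, l)) = Fam (h (l, x), 0))

open Set Metric

namespace Stmt17Aux
noncomputable section

def uu (v : Fin 3 → ℝ) : ℝ := v 0 + v 1 + v 2
def ns (v : Fin 3 → ℝ) : ℝ := v 0 ^ 2 + v 1 ^ 2 + v 2 ^ 2
def pp (v : Fin 3 → ℝ) : ℝ := v 0 * v 1 * v 2
def psi (v : Fin 3 → ℝ) (l s : ℝ) : ℝ :=
  3 * s ^ 3 + 3 * uu v * s ^ 2 + 3 * ns v * s - l * pp v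

lemma comp_le (v : Fin 3 → ℝ) (i : Fin 3) : |v i| ≤ ‖v‖ := by
  simpa [Real.norm_eq_abs] using norm_le_pi_norm v i

lemma uu_le (v : Fin 3 → ℝ) : |uu v| ≤ 3 * ‖v‖ := by
  have h0 := comp_le v 0; have h1 := comp_le v 1; have h2 := comp_le v 2
  unfold uu
  calc |v 0 + v 1 + v 2| ≤ |v 0| + |v 1| + |v 2| := by
        apply (abs_add_le _ _).trans; gcongr; exact abs_add_le _ _
    _ ≤ 3 * ‖v‖ := by linarith

lemma pp_le (v : Fin 3 → ℝ) : |pp v| ≤ ‖v‖ ^ 3 := by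
  have h0 := comp_le v 0; have h1 := comp_le v 1; have h2 := comp_le v 2
  unfold pp
  rw [abs_mul, abs_mul]
  calc |v 0| * |v 1| * |v 2| ≤ ‖v‖ * ‖v‖ * ‖v‖ := by
        gcongr <;> positivity
    _ = ‖v‖ ^ 3 := by ring

lemma ns_le (v : Fin 3 → ℝ) : ns v ≤ 3 * ‖v‖ ^ 2 := by
  have h0 := comp_le v 0; have h1 := comp_le v 1; have h2 := comp_le v 2
  have s0 : v 0 ^ 2 ≤ ‖v‖ ^ 2 := by rw [← sq_abs (v 0)]; gcongr
  have s1 : v 1 ^ 2 ≤ ‖v‖ ^ 2 := by rw [← sq_abs (v 1)]; gcongr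
  have s2 : v 2 ^ 2 ≤ ‖v‖ ^ 2 := by rw [← sq_abs (v 2)]; gcongr
  unfold ns; linarith

lemma ns_ge (v : Fin 3 → ℝ) : ‖v‖ ^ 2 ≤ ns v := by
  have h : ‖v‖ ≤ Real.sqrt (ns v) := by
    rw [pi_norm_le_iff_of_nonneg (Real.sqrt_nonneg _)]
    intro i
    rw [Real.norm_eq_abs, ← Real.sqrt_sq_eq_abs]
    apply Real.sqrt_le_sqrt
    unfold ns
    fin_cases i <;> simp <;> nlinarith [sq_nonneg (v 0), sq_nonneg (v 1), sq_nonneg (v 2)]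
  calc ‖v‖ ^ 2 ≤ Real.sqrt (ns v) ^ 2 := by
        apply pow_le_pow_left₀ (norm_nonneg _) h
    _ = ns v := Real.sq_sqrt (by unfold ns; positivity)

lemma ns_nonneg (v : Fin 3 → ℝ) : 0 ≤ ns v := by unfold ns; positivity

-- endpoint signs
lemma psi_hi (v : Fin 3 → ℝ) {l : ℝ} (hl : |l| ≤ 1 / 1000) :
    0 ≤ psi v l (‖v‖ / 10) := by
  set n := ‖v‖ with hn
  have hn0 : 0 ≤ n := norm_nonneg _
  have hu := abs_le.mp (uu_le v)
  have hns := ns_ge v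
  have hlp : |l * pp v| ≤ (1 / 1000) * n ^ 3 := by
    rw [abs_mul]
    apply mul_le_mul hl (pp_le v) (abs_nonneg _) (by norm_num)
  have hlp' := abs_le.mp hlp
  unfold psi
  nlinarith [mul_nonneg hn0 (mul_nonneg hn0 hn0), sq_nonneg n,
    mul_le_mul_of_nonneg_right hu.1 (sq_nonneg (n / 10)),
    mul_le_mul_of_nonneg_right hns hn0]

lemma psi_lo (v : Fin 3 → ℝ) {l : ℝ} (hl : |l| ≤ 1 / 1000) :
    psi v l (-(‖v‖ / 10)) ≤ 0 := by
  set n := ‖v‖ with hn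
  have hn0 : 0 ≤ n := norm_nonneg _
  have hu := abs_le.mp (uu_le v)
  have hns := ns_ge v
  have hlp : |l * pp v| ≤ (1 / 1000) * n ^ 3 := by
    rw [abs_mul]
    apply mul_le_mul hl (pp_le v) (abs_nonneg _) (by norm_num)
  have hlp' := abs_le.mp hlp
  unfold psi
  nlinarith [mul_nonneg hn0 (mul_nonneg hn0 hn0),
    mul_le_mul_of_nonneg_right hu.2 (sq_nonneg (n / 10)),
    mul_le_mul_of_nonneg_right hns hn0]

-- monotonicity gap
lemma root_gap (v : Fin 3 → ℝ) (l : ℝ) {s s' : ℝ}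
    (hs : s ∈ Icc (-(‖v‖ / 10)) (‖v‖ / 10)) (hs' : s' ∈ Icc (-(‖v‖ / 10)) (‖v‖ / 10))
    (hss : s ≤ s') :
    (6 / 5) * ‖v‖ ^ 2 * (s' - s) ≤ psi v l s' - psi v l s := by
  set n := ‖v‖ with hn
  have hn0 : 0 ≤ n := norm_nonneg _
  have hu := abs_le.mp (uu_le v)
  have hns := ns_ge v
  obtain ⟨hs1, hs2⟩ := hs; obtain ⟨hs'1, hs'2⟩ := hs'
  have hb : (6 / 5) * n ^ 2 ≤ 3 * (s' ^ 2 + s' * s + s ^ 2) + 3 * uu v * (s' + s) + 3 * ns v := by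
    nlinarith [sq_nonneg (s + s'), sq_nonneg (s - s'),
      mul_nonneg (by linarith : (0:ℝ) ≤ 3 * n - uu v) (by linarith : (0:ℝ) ≤ n / 5 - (s + s')),
      mul_nonneg (by linarith : (0:ℝ) ≤ 3 * n + uu v) (by linarith : (0:ℝ) ≤ s + s' + n / 5)]
  have he : psi v l s' - psi v l s
      = (s' - s) * (3 * (s' ^ 2 + s' * s + s ^ 2) + 3 * uu v * (s' + s) + 3 * ns v) := by
    unfold psi; ring
  rw [he]
  calc (6 / 5) * n ^ 2 * (s' - s) = (s' - s) * ((6 / 5) * n ^ 2) := by ring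
    _ ≤ (s' - s) * (3 * (s' ^ 2 + s' * s + s ^ 2) + 3 * uu v * (s' + s) + 3 * ns v) := by
        apply mul_le_mul_of_nonneg_left hb (by linarith)

lemma exists_root (v : Fin 3 → ℝ) {l : ℝ} (hl : |l| ≤ 1 / 1000) :
    ∃ s, s ∈ Icc (-(‖v‖ / 10)) (‖v‖ / 10) ∧ psi v l s = 0 := by
  have hcont : ContinuousOn (psi v l) (Icc (-(‖v‖ / 10)) (‖v‖ / 10)) := by
    apply Continuous.continuousOn
    unfold psi; continuity
  have hab : -(‖v‖ / 10) ≤ ‖v‖ / 10 := by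
    have := norm_nonneg v; linarith
  have := intermediate_value_Icc hab hcont
  have h0 : (0 : ℝ) ∈ Icc (psi v l (-(‖v‖ / 10))) (psi v l (‖v‖ / 10)) :=
    ⟨psi_lo v hl, psi_hi v hl⟩
  obtain ⟨s, hs, hval⟩ := this h0
  exact ⟨s, hs, hval⟩

def S (v : Fin 3 → ℝ) (l : ℝ) : ℝ :=
  if h : |l| ≤ 1 / 1000 then (exists_root v h).choose else 0

lemma S_spec (v : Fin 3 → ℝ) {l : ℝ} (hl : |l| ≤ 1 / 1000) :
    S v l ∈ Icc (-(‖v‖ / 10)) (‖v‖ / 10) ∧ psi v l (S v l) = 0 := by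
  rw [S, dif_pos hl]
  exact (exists_root v hl).choose_spec

lemma S_bound (v : Fin 3 → ℝ) {l : ℝ} (hl : |l| ≤ 1 / 1000) :
    |S v l| ≤ |l| * ‖v‖ / 2 := by
  obtain ⟨⟨hm1, hm2⟩, hroot⟩ := S_spec v hl
  set n := ‖v‖ with hn
  have hn0 : 0 ≤ n := norm_nonneg _
  rcases eq_or_lt_of_le hn0 with h0 | hpos
  · have h0' : n = 0 := h0.symm
    have : S v l = 0 := le_antisymm (by rw [h0'] at hm2; linarith) (by rw [h0'] at hm1; linarith)
    rw [this, abs_zero]; positivity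
  · set s := S v l with hs
    have hu := abs_le.mp (uu_le v)
    have hns1 := ns_ge v
    have hns2 := ns_le v
    have hlp := abs_le.mp (by
      rw [abs_mul]
      exact mul_le_mul_of_nonneg_left (pp_le v) (abs_nonneg l) : |l * pp v| ≤ |l| * n ^ 3)
    have heq : 3 * s ^ 3 + 3 * uu v * s ^ 2 + 3 * ns v * s = l * pp v := by
      have := hroot; unfold psi at this; linarith
    -- show n^2 * (2 * |s| - |l| * n) ≤ 0 style, via two cases on sign of s
    have key : 2 * n ^ 2 * |s| ≤ |l| * n ^ 3 := by
      rcases abs_cases s with ⟨ha, hsgn⟩ | ⟨ha, hsgn⟩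
      · rw [ha]
        nlinarith [mul_le_mul_of_nonneg_right hu.1 (sq_nonneg s),
          mul_le_mul_of_nonneg_right hns1 hsgn,
          mul_nonneg (mul_nonneg hn0 hn0) hsgn, sq_nonneg s,
          mul_le_mul_of_nonneg_left hm2 (le_of_lt hpos)]
      · rw [ha]
        nlinarith [mul_le_mul_of_nonneg_right hu.2 (sq_nonneg s),
          mul_le_mul_of_nonneg_right hns1 (by linarith : (0:ℝ) ≤ -s),
          sq_nonneg s,
          mul_le_mul_of_nonneg_left hm1 (le_of_lt hpos)]
    have hnn : 0 < n ^ 2 := by positivity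
    calc |s| = (2 * n ^ 2 * |s|) / (2 * n ^ 2) := by field_simp
      _ ≤ (|l| * n ^ 3) / (2 * n ^ 2) := by gcongr
      _ = |l| * n / 2 := by field_simp

lemma root_unique (v : Fin 3 → ℝ) (l : ℝ) {s s' : ℝ}
    (hs : s ∈ Icc (-(‖v‖ / 10)) (‖v‖ / 10)) (hs' : s' ∈ Icc (-(‖v‖ / 10)) (‖v‖ / 10))
    (h1 : psi v l s = 0) (h2 : psi v l s' = 0) : s = s' := by
  rcases eq_or_lt_of_le (norm_nonneg v) with h0 | hpos
  · have h0' : ‖v‖ = 0 := h0.symm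
    rw [h0'] at hs hs'
    have := hs.1; have := hs.2; have := hs'.1; have := hs'.2
    linarith
  · by_contra hne
    rcases lt_or_gt_of_ne hne with hlt | hlt
    · have := root_gap v l hs hs' (le_of_lt hlt)
      rw [h1, h2] at this
      nlinarith [mul_pos (mul_pos (by norm_num : (0:ℝ) < 6/5) (by positivity : (0:ℝ) < ‖v‖ ^ 2)) (by linarith : (0:ℝ) < s' - s)]
    · have := root_gap v l hs' hs (le_of_lt hlt)
      rw [h1, h2] at this
      nlinarith [mul_pos (mul_pos (by norm_num : (0:ℝ) < 6/5) (by positivity : (0:ℝ) < ‖v‖ ^ 2)) (by linarith : (0:ℝ) < s - s')]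

lemma S_zero (v : Fin 3 → ℝ) : S v 0 = 0 := by
  have hl : |(0:ℝ)| ≤ 1 / 1000 := by norm_num
  obtain ⟨hmem, hroot⟩ := S_spec v hl
  have h0 : psi v 0 0 = 0 := by unfold psi; ring
  have hmem0 : (0:ℝ) ∈ Icc (-(‖v‖ / 10)) (‖v‖ / 10) := by
    constructor <;> [linarith [norm_nonneg v]; linarith [norm_nonneg v]]
  exact root_unique v 0 hmem hmem0 hroot h0

-- difference bounds
lemma uu_diff (v v' : Fin 3 → ℝ) : |uu v - uu v'| ≤ 3 * ‖v - v'‖ := by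
  have h0 := comp_le (v - v') 0; have h1 := comp_le (v - v') 1; have h2 := comp_le (v - v') 2
  simp only [Pi.sub_apply] at h0 h1 h2
  have := abs_le.mp h0; have := abs_le.mp h1; have := abs_le.mp h2
  unfold uu
  rw [abs_le]; constructor <;> [linarith; linarith]

lemma ns_diff (v v' : Fin 3 → ℝ) {M : ℝ} (h : ‖v‖ ≤ M) (h' : ‖v'‖ ≤ M) :
    |ns v - ns v'| ≤ 6 * M * ‖v - v'‖ := by
  have d0 := comp_le (v - v') 0; have d1 := comp_le (v - v') 1; have d2 := comp_le (v - v') 2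
  simp only [Pi.sub_apply] at d0 d1 d2
  have a0 := (comp_le v 0).trans h; have a1 := (comp_le v 1).trans h; have a2 := (comp_le v 2).trans h
  have b0 := (comp_le v' 0).trans h'; have b1 := (comp_le v' 1).trans h'; have b2 := (comp_le v' 2).trans h'
  have he : ns v - ns v' = (v 0 - v' 0) * (v 0 + v' 0) + (v 1 - v' 1) * (v 1 + v' 1)
      + (v 2 - v' 2) * (v 2 + v' 2) := by unfold ns; ring
  rw [he]
  have key : ∀ a b c : ℝ, |a| ≤ ‖v - v'‖ → |b| ≤ M → |c| ≤ M → |a * (b + c)| ≤ ‖v - v'‖ * (2 * M) := by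
    intro a b c ha hb hc
    rw [abs_mul]
    apply mul_le_mul ha ((abs_add_le _ _).trans (by linarith)) (abs_nonneg _)
      (norm_nonneg _)
  have k0 := key _ _ _ d0 a0 b0
  have k1 := key _ _ _ d1 a1 b1
  have k2 := key _ _ _ d2 a2 b2
  calc |_| ≤ |(v 0 - v' 0) * (v 0 + v' 0)| + |(v 1 - v' 1) * (v 1 + v' 1)|
        + |(v 2 - v' 2) * (v 2 + v' 2)| := by
        apply (abs_add_le _ _).trans; gcongr; exact abs_add_le _ _
    _ ≤ 6 * M * ‖v - v'‖ := by linarith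

lemma pp_diff (v v' : Fin 3 → ℝ) {M : ℝ} (h : ‖v‖ ≤ M) (h' : ‖v'‖ ≤ M) :
    |pp v - pp v'| ≤ 3 * M ^ 2 * ‖v - v'‖ := by
  have d0 := comp_le (v - v') 0; have d1 := comp_le (v - v') 1; have d2 := comp_le (v - v') 2
  simp only [Pi.sub_apply] at d0 d1 d2
  have a1 := (comp_le v 1).trans h; have a2 := (comp_le v 2).trans h
  have b0 := (comp_le v' 0).trans h'; have b1 := (comp_le v' 1).trans h'
  have hM : 0 ≤ M := (norm_nonneg v).trans h
  have he : pp v - pp v' = (v 0 - v' 0) * (v 1 * v 2) + v' 0 * ((v 1 - v' 1) * v 2)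
      + (v' 0 * v' 1) * (v 2 - v' 2) := by unfold pp; ring
  rw [he]
  have k0 : |(v 0 - v' 0) * (v 1 * v 2)| ≤ ‖v - v'‖ * M ^ 2 := by
    rw [abs_mul, abs_mul]
    calc |v 0 - v' 0| * (|v 1| * |v 2|) ≤ ‖v - v'‖ * (M * M) := by
          apply mul_le_mul d0 (mul_le_mul a1 a2 (abs_nonneg _) hM) (by positivity) (norm_nonneg _)
      _ = ‖v - v'‖ * M ^ 2 := by ring
  have k1 : |v' 0 * ((v 1 - v' 1) * v 2)| ≤ M ^ 2 * ‖v - v'‖ := by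
    rw [abs_mul, abs_mul]
    calc |v' 0| * (|v 1 - v' 1| * |v 2|) ≤ M * (‖v - v'‖ * M) := by
          apply mul_le_mul b0 (mul_le_mul d1 a2 (abs_nonneg _) (norm_nonneg _)) (by positivity) hM
      _ = M ^ 2 * ‖v - v'‖ := by ring
  have k2 : |(v' 0 * v' 1) * (v 2 - v' 2)| ≤ M ^ 2 * ‖v - v'‖ := by
    rw [abs_mul, abs_mul]
    calc |v' 0| * |v' 1| * |v 2 - v' 2| ≤ M * M * ‖v - v'‖ := by
          apply mul_le_mul (mul_le_mul b0 b1 (abs_nonneg _) hM) d2 (abs_nonneg _) (by positivity)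
      _ = M ^ 2 * ‖v - v'‖ := by ring
  calc |_| ≤ |(v 0 - v' 0) * (v 1 * v 2)| + |v' 0 * ((v 1 - v' 1) * v 2)|
        + |(v' 0 * v' 1) * (v 2 - v' 2)| := by
        apply (abs_add_le _ _).trans; gcongr; exact abs_add_le _ _
    _ ≤ 3 * M ^ 2 * ‖v - v'‖ := by linarith

lemma S_lip_le (v v' : Fin 3 → ℝ) {l l' : ℝ} (hl : |l| ≤ 1 / 1000) (hl' : |l'| ≤ 1 / 1000)
    (hord : ‖v'‖ ≤ ‖v‖) :
    |S v l - S v' l'| ≤ (1 / 50) * ‖v - v'‖ + ‖v‖ * |l - l'| := by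
  set n := ‖v‖ with hn
  set d := ‖v - v'‖ with hd
  have hn0 : 0 ≤ n := norm_nonneg _
  have hd0 : 0 ≤ d := norm_nonneg _
  set s := S v l with hs
  set s' := S v' l' with hs'
  obtain ⟨hsmem, hsroot⟩ := S_spec v hl
  obtain ⟨hs'mem, hs'root⟩ := S_spec v' hl'
  have hsb := S_bound v hl
  have hs'b := S_bound v' hl'
  have hs'small : |s'| ≤ n / 2000 := by
    calc |s'| ≤ |l'| * ‖v'‖ / 2 := hs'b
      _ ≤ (1 / 1000) * n / 2 := by
          apply div_le_div_of_nonneg_right _ (by norm_num)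
          exact mul_le_mul hl' hord (norm_nonneg _) (by norm_num)
      _ = n / 2000 := by ring
  rcases eq_or_lt_of_le hn0 with h0 | hpos
  · -- n = 0 : both roots are 0
    have hzn : n = 0 := h0.symm
    have hz1 : s = 0 := by
      have := hsb; rw [← hn, hzn] at this
      simpa using abs_eq_zero.mp (le_antisymm (by simpa using this) (abs_nonneg _))
    have hz2 : s' = 0 := by
      have h2 : |s'| ≤ 0 := by rw [hzn] at hs'small; linarith
      exact abs_eq_zero.mp (le_antisymm h2 (abs_nonneg _))
    rw [hz1, hz2]; simp
    positivity
  · have hs'mem2 : s' ∈ Icc (-(n / 10)) (n / 10) := by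
      constructor
      · have := (abs_le.mp hs'small).1; linarith
      · have := (abs_le.mp hs'small).2; linarith
    -- H1
    have H1 : (6 / 5) * n ^ 2 * |s - s'| ≤ |psi v l s'| := by
      rcases le_total s s' with hss | hss
      · have := root_gap v l hsmem hs'mem2 hss
        rw [hsroot] at this
        rw [abs_sub_comm, abs_of_nonneg (by linarith : (0:ℝ) ≤ s' - s)]
        calc (6 / 5) * n ^ 2 * (s' - s) ≤ psi v l s' - 0 := this
          _ ≤ |psi v l s'| := by simpa using le_abs_self _
      · have := root_gap v l hs'mem2 hsmem hss
        rw [hsroot] at this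
        rw [abs_of_nonneg (by linarith : (0:ℝ) ≤ s - s')]
        calc (6 / 5) * n ^ 2 * (s - s') ≤ 0 - psi v l s' := this
          _ ≤ |psi v l s'| := by simpa using neg_le_abs _
    -- expansion
    have hexp : psi v l s' = 3 * (uu v - uu v') * s' ^ 2 + 3 * (ns v - ns v') * s'
        + (-((l - l') * pp v)) + (-(l' * (pp v - pp v'))) := by
      have h0 : psi v' l' s' = 0 := hs'root
      unfold psi at h0 ⊢
      linear_combination h0
    have B : |psi v l s'| ≤ 3 * |uu v - uu v'| * s' ^ 2 + 3 * |ns v - ns v'| * |s'|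
        + |l - l'| * |pp v| + |l'| * |pp v - pp v'| := by
      rw [hexp]
      calc |3 * (uu v - uu v') * s' ^ 2 + 3 * (ns v - ns v') * s'
          + (-((l - l') * pp v)) + (-(l' * (pp v - pp v')))|
          ≤ |3 * (uu v - uu v') * s' ^ 2| + |3 * (ns v - ns v') * s'|
            + |(-((l - l') * pp v))| + |(-(l' * (pp v - pp v')))| := by
            apply (abs_add_le _ _).trans
            gcongr
            apply (abs_add_le _ _).trans
            gcongr
            exact abs_add_le _ _
        _ = 3 * |uu v - uu v'| * s' ^ 2 + 3 * |ns v - ns v'| * |s'|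
            + |l - l'| * |pp v| + |l'| * |pp v - pp v'| := by
            rw [abs_neg, abs_neg, abs_mul, abs_mul, abs_mul, abs_mul, abs_mul, abs_mul]
            simp [abs_of_nonneg, sq_abs]
    have hud := uu_diff v v'
    have hnsd := ns_diff v v' (le_refl n) hord
    have hppd := pp_diff v v' (le_refl n) hord
    have hpv := pp_le v
    have hA : 3 * |uu v - uu v'| * s' ^ 2 ≤ 9 * d * (n / 2000) ^ 2 := by
      have hsq : s' ^ 2 ≤ (n / 2000) ^ 2 := by
        rw [← sq_abs s']
        apply pow_le_pow_left₀ (abs_nonneg _) hs'small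
      apply mul_le_mul (by linarith) hsq (sq_nonneg _) (by positivity)
    have hB2 : 3 * |ns v - ns v'| * |s'| ≤ 18 * n * d * (n / 2000) := by
      apply mul_le_mul (by linarith) hs'small (abs_nonneg _) (by positivity)
    have hC : |l - l'| * |pp v| ≤ |l - l'| * n ^ 3 :=
      mul_le_mul_of_nonneg_left hpv (abs_nonneg _)
    have hD : |l'| * |pp v - pp v'| ≤ (1 / 1000) * (3 * n ^ 2 * d) := by
      apply mul_le_mul hl' hppd (abs_nonneg _) (by norm_num)
    have H2 : |psi v l s'| ≤ (3 / 200) * n ^ 2 * d + n ^ 3 * |l - l'| := by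
      linarith [B, hA, hB2, hC, hD, mul_nonneg (mul_nonneg hn0 hn0) hd0]
    have hfin : (6 / 5) * n ^ 2 * |s - s'|
        ≤ (6 / 5) * n ^ 2 * ((1 / 50) * d + n * |l - l'|) := by
      linarith [H1, H2, mul_nonneg (mul_nonneg hn0 hn0) hd0,
        mul_nonneg (mul_nonneg (mul_nonneg hn0 hn0) hn0) (abs_nonneg (l - l'))]
    have hpos2 : (0:ℝ) < (6 / 5) * n ^ 2 := by positivity
    exact le_of_mul_le_mul_left hfin hpos2

lemma S_lip (v v' : Fin 3 → ℝ) {l l' : ℝ} (hl : |l| ≤ 1 / 1000) (hl' : |l'| ≤ 1 / 1000)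
    (hv : ‖v‖ ≤ 1) (hv' : ‖v'‖ ≤ 1) :
    |S v l - S v' l'| ≤ (1 / 50) * ‖v - v'‖ + |l - l'| := by
  rcases le_total ‖v'‖ ‖v‖ with hord | hord
  · have := S_lip_le v v' hl hl' hord
    have h2 : ‖v‖ * |l - l'| ≤ 1 * |l - l'| := by
      apply mul_le_mul_of_nonneg_right hv (abs_nonneg _)
    linarith
  · have := S_lip_le v' v hl' hl hord
    rw [abs_sub_comm] at this
    rw [← norm_sub_rev v' v]
    have h2 : ‖v'‖ * |l' - l| ≤ 1 * |l - l'| := by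
      rw [abs_sub_comm]
      apply mul_le_mul_of_nonneg_right hv' (abs_nonneg _)
    rw [abs_sub_comm l l'] at h2 ⊢
    linarith

-- max comparison endgames
lemma max_cmp3 {A B C C' : ℝ} (hA : 0 ≤ A) (hB : 0 ≤ B) (hC : 0 ≤ C) (hC' : 0 ≤ C')
    (h1 : C' ≤ 2 * C + A) (h2 : C ≤ 2 * C' + 2 * A) :
    max A (max B C') ≤ 9 * max A (max B C) ∧ max A (max B C) ≤ 9 * max A (max B C') := by
  have mA : A ≤ max A (max B C) := le_max_left _ _
  have mB : B ≤ max A (max B C) := le_trans (le_max_left _ _) (le_max_right _ _)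
  have mC : C ≤ max A (max B C) := le_trans (le_max_right _ _) (le_max_right _ _)
  have mA' : A ≤ max A (max B C') := le_max_left _ _
  have mB' : B ≤ max A (max B C') := le_trans (le_max_left _ _) (le_max_right _ _)
  have mC' : C' ≤ max A (max B C') := le_trans (le_max_right _ _) (le_max_right _ _)
  exact ⟨max_le (by linarith) (max_le (by linarith) (by linarith)),
    max_le (by linarith) (max_le (by linarith) (by linarith))⟩

lemma max_cmp4 {A B C C' Y : ℝ} (hA : 0 ≤ A) (hB : 0 ≤ B) (hC : 0 ≤ C) (hC' : 0 ≤ C')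
    (hY : 0 ≤ Y) (h1 : C' ≤ 2 * C + A) (h2 : C ≤ 2 * C' + 2 * A) :
    max A (max (max B C') Y) ≤ 9 * max A (max (max B C) Y) ∧
      max A (max (max B C) Y) ≤ 9 * max A (max (max B C') Y) := by
  have mA : A ≤ max A (max (max B C) Y) := le_max_left _ _
  have mB : B ≤ max A (max (max B C) Y) :=
    le_trans (le_trans (le_max_left _ _) (le_max_left _ _)) (le_max_right _ _)
  have mC : C ≤ max A (max (max B C) Y) :=
    le_trans (le_trans (le_max_right _ _) (le_max_left _ _)) (le_max_right _ _)
  have mY : Y ≤ max A (max (max B C) Y) :=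
    le_trans (le_max_right _ _) (le_max_right _ _)
  have mA' : A ≤ max A (max (max B C') Y) := le_max_left _ _
  have mB' : B ≤ max A (max (max B C') Y) :=
    le_trans (le_trans (le_max_left _ _) (le_max_left _ _)) (le_max_right _ _)
  have mC' : C' ≤ max A (max (max B C') Y) :=
    le_trans (le_trans (le_max_right _ _) (le_max_left _ _)) (le_max_right _ _)
  have mY' : Y ≤ max A (max (max B C') Y) :=
    le_trans (le_max_right _ _) (le_max_right _ _)
  exact ⟨max_le (by linarith) (max_le (max_le (by linarith) (by linarith)) (by linarith)),
    max_le (by linarith) (max_le (max_le (by linarith) (by linarith)) (by linarith))⟩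

-- norm bounds for the shifted map
lemma Phi_ub (v v' : Fin 3 → ℝ) (l l' : ℝ) :
    ‖(fun i => v i + S v l) - (fun i => v' i + S v' l')‖ ≤ ‖v - v'‖ + |S v l - S v' l'| := by
  rw [pi_norm_le_iff_of_nonneg (by positivity)]
  intro i
  have hc := comp_le (v - v') i
  simp only [Pi.sub_apply] at hc ⊢
  rw [Real.norm_eq_abs]
  calc |v i + S v l - (v' i + S v' l')| = |(v i - v' i) + (S v l - S v' l')| := by ring_nf
    _ ≤ |v i - v' i| + |S v l - S v' l'| := abs_add_le _ _
    _ ≤ _ := by linarith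

lemma Phi_lb (v v' : Fin 3 → ℝ) (l l' : ℝ) :
    ‖v - v'‖ ≤ ‖(fun i => v i + S v l) - (fun i => v' i + S v' l')‖ + |S v l - S v' l'| := by
  rw [pi_norm_le_iff_of_nonneg (by positivity)]
  intro i
  have hc := comp_le ((fun i => v i + S v l) - (fun i => v' i + S v' l')) i
  simp only [Pi.sub_apply] at hc ⊢
  rw [Real.norm_eq_abs]
  calc |v i - v' i| = |(v i + S v l - (v' i + S v' l')) + (-(S v l - S v' l'))| := by ring_nf
    _ ≤ |v i + S v l - (v' i + S v' l')| + |(-(S v l - S v' l'))| := abs_add_le _ _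
    _ ≤ _ := by rw [abs_neg]; linarith

end
end Stmt17Aux

set_option maxHeartbeats 2000000 in
open Stmt17Aux in
/-- for every `k`, the deformation
`F(w₁,…,w_k,x,y,z,λ) = w₁² + ⋯ + w_k² + x³ + y³ + z³ + λxyz`
is bi-Lipschitz 𝒦-trivial as a germ at the origin (the source `ℝ^(3+k)` is modelled
as `(Fin k → ℝ) × (Fin 3 → ℝ)`). -/
theorem stmt17 (k : ℕ) :
    BiLipKTrivial (fun q : ((Fin k → ℝ) × (Fin 3 → ℝ)) × ℝ =>
      (∑ i : Fin k, q.1.1 i ^ 2) + q.1.2 0 ^ 3 + q.1.2 1 ^ 3 + q.1.2 2 ^ 3 +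
        q.2 * q.1.2 0 * q.1.2 1 * q.1.2 2) := by
  classical
  refine ⟨Metric.ball (0 : ℝ × ((Fin k → ℝ) × (Fin 3 → ℝ)) × ℝ) (1/1000), fun q => q.2.2,
    Metric.ball (0 : ℝ × ((Fin k → ℝ) × (Fin 3 → ℝ))) (1/1000),
    fun q => (q.2.1, fun i => q.2.2 i + S q.2.2 q.1),
    Metric.ball_mem_nhds _ (by norm_num), Metric.ball_mem_nhds _ (by norm_num),
    ?_, ?_, ?_, ?_, ?_⟩
  · -- h (0, x) = x
    intro x hx
    dsimp only
    refine Prod.ext rfl ?_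
    funext i
    simp [S_zero]
  · -- BiLipOn H V
    refine ⟨9, by norm_num, ?_⟩
    intro a ha b hb
    simp only [Metric.mem_ball, dist_zero_right] at ha hb
    have hal : |a.1| < 1/1000 :=
      lt_of_le_of_lt (by simpa [Real.norm_eq_abs] using norm_fst_le a) ha
    have hav : ‖a.2.2‖ < 1/1000 :=
      lt_of_le_of_lt ((norm_snd_le a.2).trans (norm_snd_le a)) ha
    have hbl : |b.1| < 1/1000 :=
      lt_of_le_of_lt (by simpa [Real.norm_eq_abs] using norm_fst_le b) hb
    have hbv : ‖b.2.2‖ < 1/1000 :=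
      lt_of_le_of_lt ((norm_snd_le b.2).trans (norm_snd_le b)) hb
    have hS := S_lip a.2.2 b.2.2 (le_of_lt hal) (le_of_lt hbl)
      (by linarith) (by linarith)
    have hub := Phi_ub a.2.2 b.2.2 a.1 b.1
    have hlb := Phi_lb a.2.2 b.2.2 a.1 b.1
    have hda : dist a b = max |a.1 - b.1| (max ‖a.2.1 - b.2.1‖ ‖a.2.2 - b.2.2‖) := by
      simp [dist_eq_norm, Prod.norm_def, Prod.fst_sub, Prod.snd_sub, Real.norm_eq_abs]
    have hdH : dist ((fun q : ℝ × ((Fin k → ℝ) × (Fin 3 → ℝ)) => (q.1, (q.2.1, fun i => q.2.2 i + S q.2.2 q.1))) a)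
        ((fun q : ℝ × ((Fin k → ℝ) × (Fin 3 → ℝ)) => (q.1, (q.2.1, fun i => q.2.2 i + S q.2.2 q.1))) b)
        = max |a.1 - b.1| (max ‖a.2.1 - b.2.1‖
          ‖(fun i => a.2.2 i + S a.2.2 a.1) - (fun i => b.2.2 i + S b.2.2 b.1)‖) := by
      simp [dist_eq_norm, Prod.norm_def, Prod.fst_sub, Prod.snd_sub, Real.norm_eq_abs]
    have hd1 : ‖(fun i => a.2.2 i + S a.2.2 a.1) - (fun i => b.2.2 i + S b.2.2 b.1)‖
        ≤ 2 * ‖a.2.2 - b.2.2‖ + |a.1 - b.1| := by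
      have h50 : (1/50 : ℝ) * ‖a.2.2 - b.2.2‖ ≤ ‖a.2.2 - b.2.2‖ := by
        have := norm_nonneg (a.2.2 - b.2.2); linarith
      linarith
    have hd2 : ‖a.2.2 - b.2.2‖
        ≤ 2 * ‖(fun i => a.2.2 i + S a.2.2 a.1) - (fun i => b.2.2 i + S b.2.2 b.1)‖
          + 2 * |a.1 - b.1| := by
      have h1 : (49/50 : ℝ) * ‖a.2.2 - b.2.2‖
          ≤ ‖(fun i => a.2.2 i + S a.2.2 a.1) - (fun i => b.2.2 i + S b.2.2 b.1)‖
            + |a.1 - b.1| := by linarith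
      have := norm_nonneg ((fun i => a.2.2 i + S a.2.2 a.1) - (fun i => b.2.2 i + S b.2.2 b.1))
      have := abs_nonneg (a.1 - b.1)
      linarith
    obtain ⟨c1, c2⟩ := max_cmp3 (abs_nonneg (a.1 - b.1)) (norm_nonneg (a.2.1 - b.2.1))
      (norm_nonneg (a.2.2 - b.2.2)) (norm_nonneg _) hd1 hd2
    constructor
    · rw [div_le_iff₀ (by norm_num : (0:ℝ) < 9)]
      rw [hda, hdH]
      linarith
    · rw [hda, hdH] at *
      linarith
  · -- BiLipOn K U
    refine ⟨9, by norm_num, ?_⟩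
    intro a ha b hb
    simp only [Metric.mem_ball, dist_zero_right] at ha hb
    have hal : |a.1| < 1/1000 :=
      lt_of_le_of_lt (by simpa [Real.norm_eq_abs] using norm_fst_le a) ha
    have hav : ‖a.2.1.2‖ < 1/1000 :=
      lt_of_le_of_lt ((norm_snd_le a.2.1).trans ((norm_fst_le a.2).trans (norm_snd_le a))) ha
    have hbl : |b.1| < 1/1000 :=
      lt_of_le_of_lt (by simpa [Real.norm_eq_abs] using norm_fst_le b) hb
    have hbv : ‖b.2.1.2‖ < 1/1000 :=
      lt_of_le_of_lt ((norm_snd_le b.2.1).trans ((norm_fst_le b.2).trans (norm_snd_le b))) hb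
    have hS := S_lip a.2.1.2 b.2.1.2 (le_of_lt hal) (le_of_lt hbl)
      (by linarith) (by linarith)
    have hub := Phi_ub a.2.1.2 b.2.1.2 a.1 b.1
    have hlb := Phi_lb a.2.1.2 b.2.1.2 a.1 b.1
    have hda : dist a b = max |a.1 - b.1|
        (max (max ‖a.2.1.1 - b.2.1.1‖ ‖a.2.1.2 - b.2.1.2‖) |a.2.2 - b.2.2|) := by
      simp [dist_eq_norm, Prod.norm_def, Prod.fst_sub, Prod.snd_sub, Real.norm_eq_abs]
    have hdK : dist
        ((fun q : ℝ × ((Fin k → ℝ) × (Fin 3 → ℝ)) × ℝ =>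
          (q.1, (fun q : ℝ × ((Fin k → ℝ) × (Fin 3 → ℝ)) =>
            (q.2.1, fun i => q.2.2 i + S q.2.2 q.1)) (q.1, q.2.1),
            (fun q : ℝ × ((Fin k → ℝ) × (Fin 3 → ℝ)) × ℝ => q.2.2) q)) a)
        ((fun q : ℝ × ((Fin k → ℝ) × (Fin 3 → ℝ)) × ℝ =>
          (q.1, (fun q : ℝ × ((Fin k → ℝ) × (Fin 3 → ℝ)) =>
            (q.2.1, fun i => q.2.2 i + S q.2.2 q.1)) (q.1, q.2.1),
            (fun q : ℝ × ((Fin k → ℝ) × (Fin 3 → ℝ)) × ℝ => q.2.2) q)) b)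
        = max |a.1 - b.1| (max (max ‖a.2.1.1 - b.2.1.1‖
          ‖(fun i => a.2.1.2 i + S a.2.1.2 a.1) - (fun i => b.2.1.2 i + S b.2.1.2 b.1)‖)
          |a.2.2 - b.2.2|) := by
      simp [dist_eq_norm, Prod.norm_def, Prod.fst_sub, Prod.snd_sub, Real.norm_eq_abs]
    have hd1 : ‖(fun i => a.2.1.2 i + S a.2.1.2 a.1) - (fun i => b.2.1.2 i + S b.2.1.2 b.1)‖
        ≤ 2 * ‖a.2.1.2 - b.2.1.2‖ + |a.1 - b.1| := by
      have := norm_nonneg (a.2.1.2 - b.2.1.2); linarith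
    have hd2 : ‖a.2.1.2 - b.2.1.2‖
        ≤ 2 * ‖(fun i => a.2.1.2 i + S a.2.1.2 a.1) - (fun i => b.2.1.2 i + S b.2.1.2 b.1)‖
          + 2 * |a.1 - b.1| := by
      have := norm_nonneg ((fun i => a.2.1.2 i + S a.2.1.2 a.1)
        - (fun i => b.2.1.2 i + S b.2.1.2 b.1))
      have := abs_nonneg (a.1 - b.1)
      linarith
    obtain ⟨c1, c2⟩ := max_cmp4 (abs_nonneg (a.1 - b.1)) (norm_nonneg (a.2.1.1 - b.2.1.1))
      (norm_nonneg (a.2.1.2 - b.2.1.2)) (norm_nonneg _) (abs_nonneg (a.2.2 - b.2.2)) hd1 hd2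
    constructor
    · rw [div_le_iff₀ (by norm_num : (0:ℝ) < 9)]
      rw [hda, hdK]
      linarith
    · rw [hda, hdK]
      linarith
  · -- zero section
    intro l x _
    rfl
  · -- functional equation
    intro l x hV hU
    simp only [Metric.mem_ball, dist_zero_right] at hV
    have hl : |l| < 1/1000 :=
      lt_of_le_of_lt (by simpa [Real.norm_eq_abs] using norm_fst_le ((l, x) : ℝ × ((Fin k → ℝ) × (Fin 3 → ℝ)))) hV
    have hroot := (S_spec x.2 (le_of_lt hl)).2
    unfold psi uu ns pp at hroot
    dsimp only
    linear_combination -hroot
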